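/- Let I ⊆ (0,∞) be a nonempty open interval and a, b ∈ ℝ. Define f(x) := x^a if a ≠ 0 and f(x) := log x if a = 0, and g(x) := x^b if b ≠ 0 and g(x) := log x if b = 0. Let n ≥ 2, let λ_1,…,λ_n, μ_1,…,μ_n > 0 and α_1,…,α_n, β_1,…,β_n ∈ ℝ, and define p_i(x) := λ_i x^{α_i} and q_i(x) := μ_i x^{β_i}. If there exist γ > 0 and δ ∈ ℝ such that μ_i = γ λ_i and β_i = α_i + δ for all i ∈ {1,…,n}, and a < b + 2δ, then A_{f,p} is locally smaller than A_{g,q}. -/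

import Mathlib

open Set Function Real

/-- The `n`-variable generalized Bajraktarević mean `A_{f,p}` on the interval `I`:
`A_{f,p}(x) = f⁻¹((∑ pᵢ(xᵢ) f(xᵢ)) / (∑ pᵢ(xᵢ)))`. -/
noncomputable def bajMean {n : ℕ} (I : Set ℝ) (f : ℝ → ℝ) (p : Fin n → ℝ → ℝ)
    (x : Fin n → ℝ) : ℝ :=
  Function.invFunOn f I ((∑ i, p i (x i) * f (x i)) / (∑ i, p i (x i)))

/-- The `i`-th first-order partial derivative of `Φ : Iⁿ → ℝ`. -/
noncomputable def pder {n : ℕ} (Φ : (Fin n → ℝ) → ℝ) (i : Fin n) (y : Fin n → ℝ) : ℝ :=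
  deriv (fun t => Φ (Function.update y i t)) (y i)

/-- The second-order partial derivative `∂ᵢ∂ⱼΦ`. -/
noncomputable def pder2 {n : ℕ} (Φ : (Fin n → ℝ) → ℝ) (i j : Fin n) :
    (Fin n → ℝ) → ℝ :=
  pder (pder Φ j) i

/-- `M` is locally smaller than `N`: there is an open set `U ⊆ Iⁿ` containing the
diagonal of `Iⁿ` on which `M ≤ N`. -/
def LocallySmaller {n : ℕ} (I : Set ℝ) (M N : (Fin n → ℝ) → ℝ) : Prop :=
  ∃ U : Set (Fin n → ℝ), IsOpen U ∧ U ⊆ {x | ∀ i, x i ∈ I} ∧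
    (∀ x ∈ I, (fun _ => x) ∈ U) ∧ ∀ x ∈ U, M x ≤ N x

namespace LCpp
open Finset

variable {n : ℕ}

noncomputable def S (w η : Fin n → ℝ) (t : ℝ) : ℝ := ∑ i, w i * Real.exp (t * η i)
noncomputable def S1 (w η : Fin n → ℝ) (t : ℝ) : ℝ := ∑ i, w i * η i * Real.exp (t * η i)
noncomputable def S2 (w η : Fin n → ℝ) (t : ℝ) : ℝ := ∑ i, w i * η i ^ 2 * Real.exp (t * η i)
noncomputable def L (w η : Fin n → ℝ) (t : ℝ) : ℝ := Real.log (S w η t)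
noncomputable def LD (w η : Fin n → ℝ) (t : ℝ) : ℝ := S1 w η t / S w η t
noncomputable def V (w η : Fin n → ℝ) (t : ℝ) : ℝ :=
  (S2 w η t * S w η t - S1 w η t ^ 2) / S w η t ^ 2

variable {w η : Fin n → ℝ}

lemma Spos (hn : n ≠ 0) (hw : ∀ i, 0 < w i) (t : ℝ) : 0 < S w η t := by
  haveI : NeZero n := ⟨hn⟩
  exact Finset.sum_pos (fun i _ => mul_pos (hw i) (Real.exp_pos _)) Finset.univ_nonempty

lemma hasDerivAt_S (t : ℝ) : HasDerivAt (S w η) (S1 w η t) t := by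
  have : ∀ i ∈ Finset.univ, HasDerivAt (fun t => w i * Real.exp (t * η i))
      (w i * η i * Real.exp (t * η i)) t := by
    intro i _
    have h1 : HasDerivAt (fun t : ℝ => t * η i) (η i) t := by
      simpa using (hasDerivAt_id t).mul_const (η i)
    have := (h1.exp).const_mul (w i)
    refine this.congr_deriv ?_
    ring
  exact HasDerivAt.fun_sum this

lemma hasDerivAt_S1 (t : ℝ) : HasDerivAt (S1 w η) (S2 w η t) t := by
  have : ∀ i ∈ Finset.univ, HasDerivAt (fun t => w i * η i * Real.exp (t * η i))
      (w i * η i ^ 2 * Real.exp (t * η i)) t := by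
    intro i _
    have h1 : HasDerivAt (fun t : ℝ => t * η i) (η i) t := by
      simpa using (hasDerivAt_id t).mul_const (η i)
    have := (h1.exp).const_mul (w i * η i)
    refine this.congr_deriv ?_
    ring
  exact HasDerivAt.fun_sum this

lemma hasDerivAt_L (hn : n ≠ 0) (hw : ∀ i, 0 < w i) (t : ℝ) :
    HasDerivAt (L w η) (LD w η t) t :=
  (hasDerivAt_S t).log (Spos hn hw t).ne'

lemma hasDerivAt_LD (hn : n ≠ 0) (hw : ∀ i, 0 < w i) (t : ℝ) :
    HasDerivAt (LD w η) (V w η t) t := by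
  have := (hasDerivAt_S1 (w := w) (η := η) t).div (hasDerivAt_S (w := w) (η := η) t)
    (Spos (w := w) (η := η) hn hw t).ne'
  refine this.congr_deriv ?_
  unfold V
  ring

lemma num_ident (t : ℝ) :
    2 * (S2 w η t * S w η t - S1 w η t ^ 2) =
      ∑ i, ∑ j, w i * w j * Real.exp (t * η i) * Real.exp (t * η j) * (η i - η j) ^ 2 := by
  have h1 : S2 w η t * S w η t
      = ∑ i, ∑ j, (w i * η i ^ 2 * Real.exp (t * η i)) * (w j * Real.exp (t * η j)) :=
    Finset.sum_mul_sum _ _ _ _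
  have h2 : S w η t * S2 w η t
      = ∑ i, ∑ j, (w i * Real.exp (t * η i)) * (w j * η j ^ 2 * Real.exp (t * η j)) :=
    Finset.sum_mul_sum _ _ _ _
  have h3 : S1 w η t * S1 w η t
      = ∑ i, ∑ j, (w i * η i * Real.exp (t * η i)) * (w j * η j * Real.exp (t * η j)) :=
    Finset.sum_mul_sum _ _ _ _
  have key : 2 * (S2 w η t * S w η t - S1 w η t ^ 2)
      = S2 w η t * S w η t + S w η t * S2 w η t - 2 * (S1 w η t * S1 w η t) := by ring
  rw [key, h1, h2, h3, ← Finset.sum_add_distrib, Finset.mul_sum, ← Finset.sum_sub_distrib]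
  refine Finset.sum_congr rfl fun i _ => ?_
  rw [← Finset.sum_add_distrib, Finset.mul_sum, ← Finset.sum_sub_distrib]
  refine Finset.sum_congr rfl fun j _ => ?_
  ring

lemma num_nonneg (hw : ∀ i, 0 < w i) (t : ℝ) : 0 ≤ S2 w η t * S w η t - S1 w η t ^ 2 := by
  have h := num_ident (w := w) (η := η) t
  have hs : (0:ℝ) ≤ ∑ i, ∑ j, w i * w j * Real.exp (t * η i) * Real.exp (t * η j)
      * (η i - η j) ^ 2 := by
    refine Finset.sum_nonneg fun i _ => Finset.sum_nonneg fun j _ => ?_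
    have := (hw i).le; have := (hw j).le; positivity
  linarith

lemma V_nonneg (hw : ∀ i, 0 < w i) (t : ℝ) : 0 ≤ V w η t :=
  div_nonneg (num_nonneg hw t) (sq_nonneg _)


section Comp

variable {A B ε : ℝ}

lemma exp_term_le (hη : ∀ i, η i ∈ Icc 0 ε) {s t : ℝ}
    (hs : s ∈ Icc A B) (ht : t ∈ Icc A B) (i : Fin n) :
    (s - t) * η i ≤ (B - A) * ε := by
  have hst : |s - t| ≤ B - A := by
    rw [abs_le]; constructor
    · linarith [hs.1, ht.2]
    · linarith [hs.2, ht.1]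
  calc (s - t) * η i ≤ |s - t| * η i :=
        mul_le_mul_of_nonneg_right (le_abs_self _) (hη i).1
    _ ≤ (B - A) * ε :=
        mul_le_mul hst (hη i).2 (hη i).1 (le_trans (abs_nonneg _) hst)

lemma S_comp (hw : ∀ i, 0 < w i) (hη : ∀ i, η i ∈ Icc 0 ε) {s t : ℝ}
    (hs : s ∈ Icc A B) (ht : t ∈ Icc A B) :
    S w η s ≤ Real.exp ((B - A) * ε) * S w η t := by
  rw [S, S, Finset.mul_sum]
  refine Finset.sum_le_sum fun i _ => ?_
  have h1 : Real.exp (s * η i) ≤ Real.exp ((B - A) * ε) * Real.exp (t * η i) := by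
    rw [← Real.exp_add, Real.exp_le_exp]
    have := exp_term_le (A := A) (B := B) hη hs ht i
    linarith
  calc w i * Real.exp (s * η i) ≤ w i * (Real.exp ((B - A) * ε) * Real.exp (t * η i)) :=
        mul_le_mul_of_nonneg_left h1 (hw i).le
    _ = Real.exp ((B - A) * ε) * (w i * Real.exp (t * η i)) := by ring

lemma num_comp (hw : ∀ i, 0 < w i) (hη : ∀ i, η i ∈ Icc 0 ε) {s t : ℝ}
    (hs : s ∈ Icc A B) (ht : t ∈ Icc A B) :
    S2 w η s * S w η s - S1 w η s ^ 2 ≤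
      Real.exp (2 * ((B - A) * ε)) * (S2 w η t * S w η t - S1 w η t ^ 2) := by
  have h2 : ∑ i, ∑ j, w i * w j * Real.exp (s * η i) * Real.exp (s * η j) * (η i - η j) ^ 2
      ≤ Real.exp (2 * ((B - A) * ε)) *
        ∑ i, ∑ j, w i * w j * Real.exp (t * η i) * Real.exp (t * η j) * (η i - η j) ^ 2 := by
    rw [Finset.mul_sum]
    refine Finset.sum_le_sum fun i _ => ?_
    rw [Finset.mul_sum]
    refine Finset.sum_le_sum fun j _ => ?_
    have key : Real.exp (s * η i) * Real.exp (s * η j) ≤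
        Real.exp (2 * ((B - A) * ε)) * (Real.exp (t * η i) * Real.exp (t * η j)) := by
      rw [← Real.exp_add, ← Real.exp_add, ← Real.exp_add, Real.exp_le_exp]
      have hi := exp_term_le (A := A) (B := B) hη hs ht i
      have hj := exp_term_le (A := A) (B := B) hη hs ht j
      linarith
    calc w i * w j * Real.exp (s * η i) * Real.exp (s * η j) * (η i - η j) ^ 2
        = (w i * w j * (η i - η j) ^ 2) * (Real.exp (s * η i) * Real.exp (s * η j)) := by ring
      _ ≤ (w i * w j * (η i - η j) ^ 2) *
          (Real.exp (2 * ((B - A) * ε)) * (Real.exp (t * η i) * Real.exp (t * η j))) := by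
          apply mul_le_mul_of_nonneg_left key
          have := (hw i).le; have := (hw j).le; positivity
      _ = Real.exp (2 * ((B - A) * ε)) *
          (w i * w j * Real.exp (t * η i) * Real.exp (t * η j) * (η i - η j) ^ 2) := by ring
  rw [← num_ident, ← num_ident] at h2
  have hr : Real.exp (2 * ((B - A) * ε)) * (2 * (S2 w η t * S w η t - S1 w η t ^ 2))
      = 2 * (Real.exp (2 * ((B - A) * ε)) * (S2 w η t * S w η t - S1 w η t ^ 2)) := by ring
  rw [hr] at h2
  linarith

lemma V_comp (hn : n ≠ 0) (hw : ∀ i, 0 < w i) (hη : ∀ i, η i ∈ Icc 0 ε) {s t : ℝ}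
    (hs : s ∈ Icc A B) (ht : t ∈ Icc A B) :
    V w η s ≤ Real.exp (4 * ((B - A) * ε)) * V w η t := by
  have hSs := Spos (w := w) (η := η) hn hw s
  have hSt := Spos (w := w) (η := η) hn hw t
  have hNs := num_comp (A := A) (B := B) hw hη hs ht
  have hNt := num_nonneg (w := w) (η := η) hw t
  have hSsq : S w η t ^ 2 ≤ Real.exp (2 * ((B - A) * ε)) * S w η s ^ 2 := by
    have h := S_comp (A := A) (B := B) hw hη ht hs
    have h2 : S w η t ^ 2 ≤ (Real.exp ((B - A) * ε) * S w η s) ^ 2 := by nlinarith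
    have h3 : (Real.exp ((B - A) * ε) * S w η s) ^ 2
        = Real.exp (2 * ((B - A) * ε)) * S w η s ^ 2 := by
      rw [mul_pow, sq, ← Real.exp_add]; ring_nf
    linarith
  rw [V, V, mul_div_assoc', div_le_div_iff₀ (by positivity) (by positivity)]
  calc (S2 w η s * S w η s - S1 w η s ^ 2) * S w η t ^ 2
      ≤ (Real.exp (2 * ((B - A) * ε)) * (S2 w η t * S w η t - S1 w η t ^ 2)) *
        (Real.exp (2 * ((B - A) * ε)) * S w η s ^ 2) :=
        mul_le_mul hNs hSsq (sq_nonneg _) (by positivity)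
    _ = Real.exp (4 * ((B - A) * ε)) * (S2 w η t * S w η t - S1 w η t ^ 2) * S w η s ^ 2 := by
        rw [show (4 : ℝ) * ((B - A) * ε) = 2 * ((B - A) * ε) + 2 * ((B - A) * ε) by ring,
          Real.exp_add]
        ring

end Comp

section Err

lemma crit_min {F F' : ℝ → ℝ} {A B m : ℝ} (hm : m ∈ Icc A B)
    (hF : ∀ t, HasDerivAt F (F' t) t) (hF'm : F' m = 0)
    (hmono : MonotoneOn F' (Icc A B)) {t : ℝ} (ht : t ∈ Icc A B) : F m ≤ F t := by
  have hFd : Differentiable ℝ F := fun t => (hF t).differentiableAt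
  rcases le_total t m with htm | hmt
  · have hanti : AntitoneOn F (Icc A m) := by
      apply antitoneOn_of_deriv_nonpos (convex_Icc A m) hFd.continuous.continuousOn
        hFd.differentiableOn
      intro x hx
      rw [interior_Icc] at hx
      rw [(hF x).deriv]
      have : F' x ≤ F' m := hmono ⟨le_of_lt hx.1, le_trans (le_of_lt hx.2) hm.2⟩ hm
        (le_of_lt hx.2)
      linarith [hF'm ▸ this]
    exact hanti ⟨ht.1, htm⟩ ⟨hm.1, le_refl m⟩ htm
  · have hmono2 : MonotoneOn F (Icc m B) := by
      apply monotoneOn_of_deriv_nonneg (convex_Icc m B) hFd.continuous.continuousOn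
        hFd.differentiableOn
      intro x hx
      rw [interior_Icc] at hx
      rw [(hF x).deriv]
      have : F' m ≤ F' x := hmono hm ⟨le_trans hm.1 (le_of_lt hx.1), le_of_lt hx.2⟩
        (le_of_lt hx.1)
      linarith [hF'm ▸ this]
    exact hmono2 ⟨le_refl m, hm.2⟩ ⟨hmt, ht.2⟩ hmt

lemma taylor_bounds (hn : n ≠ 0) (hw : ∀ i, 0 < w i) {A B m c Vlo Vhi : ℝ}
    (hm : m ∈ Icc A B) (hc : c ∈ Icc A B)
    (hVlo : ∀ t ∈ Icc A B, Vlo ≤ V w η t) (hVhi : ∀ t ∈ Icc A B, V w η t ≤ Vhi) :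
    Vlo / 2 * (c - m) ^ 2 ≤ L w η c - L w η m - LD w η m * (c - m) ∧
      L w η c - L w η m - LD w η m * (c - m) ≤ Vhi / 2 * (c - m) ^ 2 := by
  have hlin : ∀ d : ℝ, ∀ t : ℝ, HasDerivAt (fun t => d * (t - m)) d t := by
    intro d t
    simpa using ((hasDerivAt_id t).sub_const m).const_mul d
  have hsq : ∀ d : ℝ, ∀ t : ℝ, HasDerivAt (fun t => d * (t - m) ^ 2) (2 * d * (t - m)) t := by
    intro d t
    have := (((hasDerivAt_id t).sub_const m).pow 2).const_mul d
    refine this.congr_deriv ?_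
    simp; ring
  constructor
  · -- lower bound via φ
    set φ : ℝ → ℝ := fun t => L w η t - L w η m - LD w η m * (t - m) - Vlo / 2 * (t - m) ^ 2
      with hφdef
    set φ' : ℝ → ℝ := fun t => LD w η t - LD w η m - Vlo * (t - m) with hφ'def
    have hφ : ∀ t, HasDerivAt φ (φ' t) t := by
      intro t
      have := ((hasDerivAt_L (w := w) (η := η) hn hw t).sub_const (L w η m)).sub
        ((hlin (LD w η m) t).add (hsq (Vlo / 2) t))
      have e : LD w η t - (LD w η m + 2 * (Vlo / 2) * (t - m)) = φ' t := by
        simp only [hφ'def]; ring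
      have hf : φ = (fun x => L w η x - L w η m) -
          ((fun t => LD w η m * (t - m)) + fun t => Vlo / 2 * (t - m) ^ 2) := by
        funext s; simp only [hφdef, Pi.sub_apply, Pi.add_apply]; ring
      rw [hf]
      exact this.congr_deriv e
    have hφ' : ∀ t, HasDerivAt φ' (V w η t - Vlo) t := by
      intro t
      have := ((hasDerivAt_LD (w := w) (η := η) hn hw t).sub_const (LD w η m)).sub
        (hlin Vlo t)
      exact this
    have hmono : MonotoneOn φ' (Icc A B) := by
      apply monotoneOn_of_deriv_nonneg (convex_Icc A B)
        (Differentiable.continuous fun t => (hφ' t).differentiableAt).continuousOn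
        (Differentiable.differentiableOn fun t => (hφ' t).differentiableAt)
      intro x hx
      rw [interior_Icc] at hx
      rw [(hφ' x).deriv]
      have := hVlo x ⟨hx.1.le, hx.2.le⟩
      linarith
    have hφ'm : φ' m = 0 := by simp [hφ'def]
    have h0 : φ m ≤ φ c := crit_min hm hφ hφ'm hmono hc
    have hφm : φ m = 0 := by simp [hφdef]
    have := hφm ▸ h0
    simp only [hφdef] at this
    linarith
  · -- upper bound via ψ
    set ψ : ℝ → ℝ := fun t => Vhi / 2 * (t - m) ^ 2 - (L w η t - L w η m - LD w η m * (t - m))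
      with hψdef
    set ψ' : ℝ → ℝ := fun t => Vhi * (t - m) - (LD w η t - LD w η m) with hψ'def
    have hψ : ∀ t, HasDerivAt ψ (ψ' t) t := by
      intro t
      have := (hsq (Vhi / 2) t).sub
        (((hasDerivAt_L (w := w) (η := η) hn hw t).sub_const (L w η m)).sub (hlin (LD w η m) t))
      have h2 : ψ' t = 2 * (Vhi / 2) * (t - m) - (LD w η t - LD w η m) := by
        rw [hψ'def]; ring
      rw [h2]; exact this
    have hψ' : ∀ t, HasDerivAt ψ' (Vhi - V w η t) t := by
      intro t
      exact (hlin Vhi t).sub ((hasDerivAt_LD (w := w) (η := η) hn hw t).sub_const (LD w η m))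
    have hmono : MonotoneOn ψ' (Icc A B) := by
      apply monotoneOn_of_deriv_nonneg (convex_Icc A B)
        (Differentiable.continuous fun t => (hψ' t).differentiableAt).continuousOn
        (Differentiable.differentiableOn fun t => (hψ' t).differentiableAt)
      intro x hx
      rw [interior_Icc] at hx
      rw [(hψ' x).deriv]
      have := hVhi x ⟨hx.1.le, hx.2.le⟩
      linarith
    have hψ'm : ψ' m = 0 := by simp [hψ'def]
    have hψm : ψ m = 0 := by simp [hψdef]
    have h0 : ψ m ≤ ψ c := crit_min hm hψ hψ'm hmono hc
    rw [hψm] at h0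
    simp only [hψdef] at h0
    linarith

lemma slope_err (hn : n ≠ 0) (hw : ∀ i, 0 < w i) {A B u v Vlo Vhi : ℝ}
    (hu : u ∈ Icc A B) (hv : v ∈ Icc A B) (huv : u < v)
    (hVlo : ∀ t ∈ Icc A B, Vlo ≤ V w η t) (hVhi : ∀ t ∈ Icc A B, V w η t ≤ Vhi) :
    |(L w η v - L w η u) / (v - u) - LD w η ((u + v) / 2)| ≤ (v - u) * (Vhi - Vlo) / 8 := by
  set m : ℝ := (u + v) / 2 with hmdef
  have hm : m ∈ Icc A B := ⟨by rw [hmdef]; linarith [hu.1, hv.1], by rw [hmdef]; linarith [hu.2, hv.2]⟩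
  obtain ⟨e1, e2⟩ := taylor_bounds (w := w) (η := η) hn hw hm hv hVlo hVhi
  obtain ⟨e3, e4⟩ := taylor_bounds (w := w) (η := η) hn hw hm hu hVlo hVhi
  have hvu : (0 : ℝ) < v - u := by linarith
  have key : (L w η v - L w η u) / (v - u) - LD w η m
      = (L w η v - L w η u - LD w η m * (v - u)) / (v - u) := by
    field_simp
  rw [key, abs_div, abs_of_pos hvu, div_le_iff₀ hvu]
  have hvm2 : (v - m) ^ 2 = (v - u) ^ 2 / 4 := by rw [hmdef]; ring
  have hum2 : (u - m) ^ 2 = (v - u) ^ 2 / 4 := by rw [hmdef]; ring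
  have hsplit : LD w η m * (v - u) = LD w η m * (v - m) - LD w η m * (u - m) := by ring
  rw [hvm2] at e1 e2
  rw [hum2] at e3 e4
  rw [abs_le]
  constructor <;> nlinarith [sq_nonneg (v - u)]

end Err

section Core

lemma LD_mem (hn : n ≠ 0) (hw : ∀ i, 0 < w i) {lo hi : ℝ}
    (hlo : ∀ i, lo ≤ η i) (hhi : ∀ i, η i ≤ hi) (t : ℝ) :
    LD w η t ∈ Icc lo hi := by
  have hS := Spos (w := w) (η := η) hn hw t
  constructor
  · rw [LD, le_div_iff₀ hS]
    rw [S1, S, Finset.mul_sum]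
    refine Finset.sum_le_sum fun i _ => ?_
    have := (Real.exp_pos (t * η i)).le
    calc lo * (w i * Real.exp (t * η i)) = (w i * Real.exp (t * η i)) * lo := by ring
      _ ≤ (w i * Real.exp (t * η i)) * η i := by
          exact mul_le_mul_of_nonneg_left (hlo i) (mul_nonneg (hw i).le this)
      _ = w i * η i * Real.exp (t * η i) := by ring
  · rw [LD, div_le_iff₀ hS]
    rw [S1, S, Finset.mul_sum]
    refine Finset.sum_le_sum fun i _ => ?_
    have := (Real.exp_pos (t * η i)).le
    calc w i * η i * Real.exp (t * η i) = (w i * Real.exp (t * η i)) * η i := by ring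
      _ ≤ (w i * Real.exp (t * η i)) * hi := by
          exact mul_le_mul_of_nonneg_left (hhi i) (mul_nonneg (hw i).le this)
      _ = hi * (w i * Real.exp (t * η i)) := by ring

lemma LD_cont (hn : n ≠ 0) (hw : ∀ i, 0 < w i) : Continuous (LD w η) :=
  Differentiable.continuous fun t => (hasDerivAt_LD (w := w) (η := η) hn hw t).differentiableAt

lemma L_cont (hn : n ≠ 0) (hw : ∀ i, 0 < w i) : Continuous (L w η) :=
  Differentiable.continuous fun t => (hasDerivAt_L (w := w) (η := η) hn hw t).differentiableAt

lemma slope_eq_LD (hn : n ≠ 0) (hw : ∀ i, 0 < w i) {u v : ℝ} (huv : u < v) :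
    ∃ ξ ∈ Ioo u v, (L w η v - L w η u) / (v - u) = LD w η ξ := by
  obtain ⟨ξ, hξ, hs⟩ := exists_hasDerivAt_eq_slope (L w η) (LD w η) huv
    (L_cont hn hw).continuousOn (fun x _ => hasDerivAt_L hn hw x)
  exact ⟨ξ, hξ, hs.symm⟩

noncomputable def Aa (a b δ : ℝ) : ℝ := min (min a 0) (min δ (δ + b))
noncomputable def Bb (a b δ : ℝ) : ℝ := max (max a 0) (max δ (δ + b))
noncomputable def epsmax (a b δ : ℝ) : ℝ :=
  Real.log (1 + 8 * ((b + 2 * δ - a) / 2) / (|a| + |b| + 1)) /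
    (8 * (Bb a b δ - Aa a b δ) + 1)

set_option maxHeartbeats 1000000 in
lemma core (hn : n ≠ 0) (hw : ∀ i, 0 < w i) {a b δ ε : ℝ}
    (hab : a < b + 2 * δ) (hη : ∀ i, η i ∈ Icc 0 ε)
    (hsmall : ε ≤ epsmax a b δ) :
    (if a = 0 then LD w η 0 else (L w η a - L w η 0) / a) ≤
      (if b = 0 then LD w η δ else (L w η (δ + b) - L w η δ) / b) := by
  rcases Nat.pos_of_ne_zero hn with hnpos
  have hε : 0 ≤ ε := by
    have i0 : Fin n := ⟨0, hnpos⟩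
    exact le_trans (hη i0).1 (hη i0).2
  set A := Aa a b δ with hAdef
  set B := Bb a b δ with hBdef
  have hAa : A ≤ a := le_trans (min_le_left _ _) (min_le_left _ _)
  have hA0 : A ≤ 0 := le_trans (min_le_left _ _) (min_le_right _ _)
  have hAδ : A ≤ δ := le_trans (min_le_right _ _) (min_le_left _ _)
  have hAδb : A ≤ δ + b := le_trans (min_le_right _ _) (min_le_right _ _)
  have hBa : a ≤ B := le_trans (le_max_left _ _) (le_max_left _ _)
  have hB0 : (0 : ℝ) ≤ B := le_trans (le_max_right _ _) (le_max_left _ _)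
  have hBδ : δ ≤ B := le_trans (le_max_left _ _) (le_max_right _ _)
  have hBδb : δ + b ≤ B := le_trans (le_max_right _ _) (le_max_right _ _)
  have hRnn : 0 ≤ B - A := by linarith
  set K := Real.exp (4 * ((B - A) * ε)) with hKdef
  have hKpos : 0 < K := Real.exp_pos _
  have hK1 : 1 ≤ K := Real.one_le_exp (by positivity)
  set P := V w η (a / 2) with hPdef
  have hP : 0 ≤ P := V_nonneg hw _
  have hm1mem : a / 2 ∈ Icc A B := ⟨by linarith, by linarith⟩
  have hm2mem : δ + b / 2 ∈ Icc A B := ⟨by linarith, by linarith⟩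
  have h0mem : (0 : ℝ) ∈ Icc A B := ⟨hA0, hB0⟩
  have hamem : a ∈ Icc A B := ⟨hAa, hBa⟩
  have hδmem : δ ∈ Icc A B := ⟨hAδ, hBδ⟩
  have hδbmem : δ + b ∈ Icc A B := ⟨hAδb, hBδb⟩
  have hVhi : ∀ t ∈ Icc A B, V w η t ≤ K * P := fun t ht =>
    V_comp (A := A) (B := B) hn hw hη ht hm1mem
  have hVlo : ∀ t ∈ Icc A B, P / K ≤ V w η t := fun t ht => by
    have := V_comp (A := A) (B := B) hn hw hη hm1mem ht
    rw [div_le_iff₀ hKpos]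
    linarith [this]
  set W := K * P - P / K with hWdef
  have hW : 0 ≤ W := by
    have h1 : P / K ≤ P := div_le_self hP hK1
    have h2 : P ≤ K * P := le_mul_of_one_le_left hP hK1
    rw [hWdef]; linarith
  -- claim 1
  have claim1 : |(if a = 0 then LD w η 0 else (L w η a - L w η 0) / a) - LD w η (a / 2)|
      ≤ |a| * W / 8 := by
    by_cases ha0 : a = 0
    · rw [if_pos ha0, ha0]
      norm_num
    · rw [if_neg ha0]
      rcases lt_or_gt_of_ne ha0 with hneg | hpos
      · have h := slope_err (w := w) (η := η) hn hw hamem h0mem hneg hVlo hVhi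
        have e1 : (L w η 0 - L w η a) / (0 - a) = (L w η a - L w η 0) / a := by
          rw [show (0 : ℝ) - a = -a from by ring, div_neg, ← neg_div, neg_sub]
        have e2 : (a + 0) / 2 = a / 2 := by ring
        rw [e1, e2] at h
        have e3 : 0 - a = |a| := by rw [abs_of_neg hneg]; ring
        rwa [e3] at h
      · have h := slope_err (w := w) (η := η) hn hw h0mem hamem hpos hVlo hVhi
        have e1 : (0 + a) / 2 = a / 2 := by ring
        have e2 : a - 0 = a := by ring
        rw [e1, e2] at h
        rwa [abs_of_pos hpos]
  -- claim 2
  have claim2 : |(if b = 0 then LD w η δ else (L w η (δ + b) - L w η δ) / b) -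
      LD w η (δ + b / 2)| ≤ |b| * W / 8 := by
    by_cases hb0 : b = 0
    · rw [if_pos hb0, hb0]
      norm_num
    · rw [if_neg hb0]
      rcases lt_or_gt_of_ne hb0 with hneg | hpos
      · have hlt : δ + b < δ := by linarith
        have h := slope_err (w := w) (η := η) hn hw hδbmem hδmem hlt hVlo hVhi
        have e1 : (L w η δ - L w η (δ + b)) / (δ - (δ + b))
            = (L w η (δ + b) - L w η δ) / b := by
          rw [show δ - (δ + b) = -b from by ring, div_neg, ← neg_div, neg_sub]
        have e2 : (δ + b + δ) / 2 = δ + b / 2 := by ring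
        rw [e1, e2] at h
        have e3 : δ - (δ + b) = |b| := by rw [abs_of_neg hneg]; ring
        rwa [e3] at h
      · have hlt : δ < δ + b := by linarith
        have h := slope_err (w := w) (η := η) hn hw hδmem hδbmem hlt hVlo hVhi
        have e1 : (δ + (δ + b)) / 2 = δ + b / 2 := by ring
        have e2 : δ + b - δ = b := by ring
        rw [e1, e2] at h
        rwa [abs_of_pos hpos]
  -- claim 3 : mean value
  have hm12 : a / 2 < δ + b / 2 := by linarith
  have claim3 : P / K * (δ + b / 2 - a / 2) ≤ LD w η (δ + b / 2) - LD w η (a / 2) := by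
    obtain ⟨ξ, hξ, hs⟩ := exists_hasDerivAt_eq_slope (LD w η) (V w η) hm12
      (LD_cont hn hw).continuousOn (fun x _ => hasDerivAt_LD hn hw x)
    have hξmem : ξ ∈ Icc A B := ⟨le_trans hm1mem.1 hξ.1.le, le_trans hξ.2.le hm2mem.2⟩
    have hlo := hVlo ξ hξmem
    rw [hs] at hlo
    rw [div_le_div_iff₀ hKpos (by linarith : (0:ℝ) < δ + b / 2 - a / 2)] at hlo
    have : P / K * (δ + b / 2 - a / 2) = P * (δ + b / 2 - a / 2) / K := by ring
    rw [this, div_le_iff₀ hKpos]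
    calc P * (δ + b / 2 - a / 2) ≤ (LD w η (δ + b / 2) - LD w η (a / 2)) * K := by
          linarith
      _ = (LD w η (δ + b / 2) - LD w η (a / 2)) * K := rfl
  -- epsilon condition
  set Δ : ℝ := δ + b / 2 - a / 2 with hΔdef
  have hΔpos : 0 < Δ := by rw [hΔdef]; linarith
  set sAB : ℝ := |a| + |b| with hsdef
  have hsnn : 0 ≤ sAB := by positivity
  have hKey : sAB * (K ^ 2 - 1) / 8 ≤ Δ := by
    set lv : ℝ := Real.log (1 + 8 * ((b + 2 * δ - a) / 2) / (|a| + |b| + 1)) with hlvdef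
    have hargpos : (0:ℝ) < 1 + 8 * ((b + 2 * δ - a) / 2) / (|a| + |b| + 1) := by
      have : (0:ℝ) < (b + 2 * δ - a) / 2 := by linarith
      positivity
    have harg1 : (1:ℝ) ≤ 1 + 8 * ((b + 2 * δ - a) / 2) / (|a| + |b| + 1) := by
      have h1 : (0:ℝ) < (b + 2 * δ - a) / 2 := by linarith
      have h2 : (0:ℝ) < |a| + |b| + 1 := by positivity
      have := div_nonneg (by linarith : (0:ℝ) ≤ 8 * ((b + 2 * δ - a) / 2)) h2.le
      linarith
    have hlv : 0 ≤ lv := Real.log_nonneg harg1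
    have hden : (0:ℝ) < 8 * (B - A) + 1 := by linarith
    have hε8 : 8 * (B - A) * ε ≤ lv := by
      have h1 : 8 * (B - A) * ε ≤ 8 * (B - A) * (lv / (8 * (B - A) + 1)) := by
        apply mul_le_mul_of_nonneg_left _ (by linarith : (0:ℝ) ≤ 8 * (B - A))
        exact hsmall
      have h2 : 8 * (B - A) * (lv / (8 * (B - A) + 1)) ≤ lv := by
        rw [mul_div_assoc', div_le_iff₀ hden]
        nlinarith
      linarith
    have hKsq : K ^ 2 = Real.exp (8 * (B - A) * ε) := by
      rw [sq, ← Real.exp_add]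
      ring_nf
    have hexp : K ^ 2 ≤ 1 + 8 * ((b + 2 * δ - a) / 2) / (|a| + |b| + 1) := by
      rw [hKsq, ← Real.exp_log hargpos]
      exact Real.exp_le_exp.mpr hε8
    have hee : 8 * ((b + 2 * δ - a) / 2) / (|a| + |b| + 1) = 8 * Δ / (sAB + 1) := by
      rw [hsdef, hΔdef]; ring
    have hK2le : K ^ 2 - 1 ≤ 8 * Δ / (sAB + 1) := by rw [← hee]; linarith
    have hstep1 : sAB * (K ^ 2 - 1) / 8 ≤ sAB * (8 * Δ / (sAB + 1)) / 8 := by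
      have := mul_le_mul_of_nonneg_left hK2le hsnn
      linarith
    have hstep2 : sAB * (8 * Δ / (sAB + 1)) / 8 = Δ * (sAB / (sAB + 1)) := by ring
    have hstep3 : Δ * (sAB / (sAB + 1)) ≤ Δ * 1 := by
      apply mul_le_mul_of_nonneg_left _ hΔpos.le
      rw [div_le_one (by linarith)]
      linarith
    linarith
  -- conclusion
  clear_value A B K P W Δ sAB
  have hc1 := abs_le.mp claim1
  have hc2 := abs_le.mp claim2
  have hfin : sAB * W / 8 ≤ P / K * Δ := by
    have hKne : K ≠ 0 := ne_of_gt hKpos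
    have hid : W = P / K * (K ^ 2 - 1) := by
      have h2 : P / K * K ^ 2 = K * P := by
        rw [div_mul_eq_mul_div, sq, mul_comm K K, ← mul_assoc,
          mul_div_assoc, div_self hKne, mul_one, mul_comm]
      rw [hWdef, ← h2]
      ring
    rw [hid]
    have : sAB * (P / K * (K ^ 2 - 1)) / 8 = P / K * (sAB * (K ^ 2 - 1) / 8) := by ring
    rw [this]
    exact mul_le_mul_of_nonneg_left hKey (div_nonneg hP hKpos.le)
  have hΔeq2 : Δ = δ + b / 2 - a / 2 := hΔdef
  have hsplit : sAB * W / 8 = |a| * W / 8 + |b| * W / 8 := by rw [hsdef]; ring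
  linarith [hc1.1, hc1.2, hc2.1, hc2.2, claim3, hfin]

end Core

section Mean

lemma invFunOn_eq_self {f : ℝ → ℝ} {I : Set ℝ} (hinj : Set.InjOn f I) {z : ℝ}
    (hz : z ∈ I) : Function.invFunOn f I (f z) = z :=
  hinj (Function.invFunOn_mem ⟨z, hz, rfl⟩) hz (Function.invFunOn_eq ⟨z, hz, rfl⟩)

lemma pow_injOn {I : Set ℝ} (hIpos : I ⊆ Set.Ioi 0) (a : ℝ) :
    Set.InjOn (fun y => if a = 0 then Real.log y else y ^ a) I := by
  intro x hx y hy hxy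
  have hx0 : (0:ℝ) < x := hIpos hx
  have hy0 : (0:ℝ) < y := hIpos hy
  by_cases ha : a = 0
  · simp only [if_pos ha] at hxy
    rw [← Real.exp_log hx0, ← Real.exp_log hy0, hxy]
  · simp only [if_neg ha] at hxy
    have := congrArg Real.log hxy
    rw [Real.log_rpow hx0, Real.log_rpow hy0] at this
    have hlog : Real.log x = Real.log y := by
      exact mul_left_cancel₀ ha this
    rw [← Real.exp_log hx0, ← Real.exp_log hy0, hlog]

lemma baj_val {n : ℕ} (hn : n ≠ 0) {I : Set ℝ} (hIconn : I.OrdConnected)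
    (hIpos : I ⊆ Set.Ioi 0) (a θ c : ℝ) (hc : 0 < c)
    (lam al : Fin n → ℝ) (hlam : ∀ i, 0 < lam i)
    (x : Fin n → ℝ) (hx : ∀ i, x i ∈ I) (i₀ : Fin n) (hmin : ∀ i, x i₀ ≤ x i) :
    bajMean I (fun y => if a = 0 then Real.log y else y ^ a)
        (fun i y => c * lam i * y ^ (al i + θ)) x
      = x i₀ * Real.exp (if a = 0
          then LD (fun i => lam i * x i ^ al i) (fun i => Real.log (x i) - Real.log (x i₀)) θ
          else (L (fun i => lam i * x i ^ al i) (fun i => Real.log (x i) - Real.log (x i₀)) (θ + a)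
            - L (fun i => lam i * x i ^ al i) (fun i => Real.log (x i) - Real.log (x i₀)) θ) / a)
      ∧ x i₀ * Real.exp (if a = 0
          then LD (fun i => lam i * x i ^ al i) (fun i => Real.log (x i) - Real.log (x i₀)) θ
          else (L (fun i => lam i * x i ^ al i) (fun i => Real.log (x i) - Real.log (x i₀)) (θ + a)
            - L (fun i => lam i * x i ^ al i) (fun i => Real.log (x i) - Real.log (x i₀)) θ) / a)
        ∈ I := by
  have hxpos : ∀ i, 0 < x i := fun i => hIpos (hx i)
  set X : ℝ := x i₀ with hXdef
  have hXpos : 0 < X := hxpos i₀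
  set w : Fin n → ℝ := fun i => lam i * x i ^ al i with hwdef
  set η : Fin n → ℝ := fun i => Real.log (x i) - Real.log (x i₀) with hηdef
  have hw : ∀ i, 0 < w i := fun i => mul_pos (hlam i) (Real.rpow_pos_of_pos (hxpos i) _)
  have hηnn : ∀ i, 0 ≤ η i := fun i =>
    sub_nonneg.mpr (Real.log_le_log (hxpos i₀) (hmin i))
  have hterm : ∀ (t : ℝ) (i : Fin n), x i ^ t = X ^ t * Real.exp (t * η i) := by
    intro t i
    rw [Real.rpow_def_of_pos (hxpos i), Real.rpow_def_of_pos hXpos, ← Real.exp_add]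
    congr 1
    simp only [hηdef, hXdef]
    ring
  have hxi : ∀ i, x i = X * Real.exp (η i) := by
    intro i
    have := hterm 1 i
    rwa [Real.rpow_one, Real.rpow_one, one_mul] at this
  set Sg : ℝ := if a = 0 then LD w η θ else (L w η (θ + a) - L w η θ) / a with hSgdef
  set z : ℝ := X * Real.exp Sg with hzdef
  -- z ∈ I
  obtain ⟨imax, _, hmax⟩ := Finset.exists_max_image Finset.univ x
    (Finset.univ_nonempty_iff.mpr ⟨⟨0, Nat.pos_of_ne_zero hn⟩⟩)
  have hηhi : ∀ i, η i ≤ η imax := fun i => by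
    simp only [hηdef]
    have := Real.log_le_log (hxpos i) (hmax i (Finset.mem_univ i))
    linarith
  have hSgmem : 0 ≤ Sg ∧ Sg ≤ η imax := by
    have hLD : ∀ t, LD w η t ∈ Icc 0 (η imax) := fun t =>
      LD_mem hn hw hηnn hηhi t
    rw [hSgdef]
    by_cases ha : a = 0
    · rw [if_pos ha]; exact ⟨(hLD θ).1, (hLD θ).2⟩
    · rw [if_neg ha]
      rcases lt_or_gt_of_ne ha with hneg | hpos
      · have hlt : θ + a < θ := by linarith
        obtain ⟨ξ, _, hs⟩ := slope_eq_LD (w := w) (η := η) hn hw hlt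
        have he : (L w η θ - L w η (θ + a)) / (θ - (θ + a))
            = (L w η (θ + a) - L w η θ) / a := by
          rw [show θ - (θ + a) = -a from by ring, div_neg, ← neg_div, neg_sub]
        rw [← he, hs]
        exact ⟨(hLD ξ).1, (hLD ξ).2⟩
      · obtain ⟨ξ, _, hs⟩ := slope_eq_LD (w := w) (η := η) hn hw (show θ < θ + a by linarith)
        have he : (L w η (θ + a) - L w η θ) / (θ + a - θ)
            = (L w η (θ + a) - L w η θ) / a := by norm_num
        rw [← he, hs]
        exact ⟨(hLD ξ).1, (hLD ξ).2⟩
  have hz1 : X ≤ z := by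
    rw [hzdef]
    nlinarith [Real.one_le_exp hSgmem.1, hXpos]
  have hz2 : z ≤ x imax := by
    rw [hzdef, hxi imax]
    have := Real.exp_le_exp.mpr hSgmem.2
    nlinarith [hXpos]
  have hzI : z ∈ I := hIconn.out (hx i₀) (hx imax) ⟨hz1, hz2⟩
  -- the value equation
  have hSθ := Spos (w := w) (η := η) hn hw θ
  have hden : ∑ i, (c * lam i * x i ^ (al i + θ)) = (c * X ^ θ) * S w η θ := by
    rw [S, Finset.mul_sum]
    refine Finset.sum_congr rfl fun i _ => ?_
    rw [Real.rpow_add (hxpos i), hterm θ i]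
    simp only [hwdef]
    ring
  have hfz : (fun y => if a = 0 then Real.log y else y ^ a) z
      = (∑ i, (c * lam i * x i ^ (al i + θ)) *
          ((fun y => if a = 0 then Real.log y else y ^ a) (x i))) /
        (∑ i, (c * lam i * x i ^ (al i + θ))) := by
    by_cases ha : a = 0
    · simp only [if_pos ha]
      have hnum : ∑ i, (c * lam i * x i ^ (al i + θ)) * Real.log (x i)
          = (c * X ^ θ) * (Real.log X * S w η θ + S1 w η θ) := by
        have hsplit : Real.log X * S w η θ + S1 w η θ
            = ∑ i, (Real.log X * (w i * Real.exp (θ * η i))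
              + w i * η i * Real.exp (θ * η i)) := by
          rw [S, S1, Finset.mul_sum, ← Finset.sum_add_distrib]
        rw [hsplit, Finset.mul_sum]
        refine Finset.sum_congr rfl fun i _ => ?_
        rw [Real.rpow_add (hxpos i), hterm θ i]
        have hlog : Real.log (x i) = Real.log X + η i := by
          simp only [hηdef, hXdef]; ring
        rw [hlog]
        simp only [hwdef]
        ring
      rw [hnum, hden, hzdef, Real.log_mul (ne_of_gt hXpos) (Real.exp_ne_zero _),
        Real.log_exp, hSgdef, if_pos ha, LD]
      field_simp
    · simp only [if_neg ha]
      have hnum : ∑ i, (c * lam i * x i ^ (al i + θ)) * (x i ^ a)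
          = (c * (X ^ θ * X ^ a)) * S w η (θ + a) := by
        rw [S, Finset.mul_sum]
        refine Finset.sum_congr rfl fun i _ => ?_
        rw [Real.rpow_add (hxpos i), hterm θ i, hterm a i,
          show (θ + a) * η i = θ * η i + a * η i from by ring, Real.exp_add]
        simp only [hwdef]
        ring
      have hSθa := Spos (w := w) (η := η) hn hw (θ + a)
      have hza : z ^ a = X ^ a * Real.exp (Sg * a) := by
        rw [hzdef, Real.mul_rpow hXpos.le (Real.exp_pos _).le,
          Real.rpow_def_of_pos (Real.exp_pos _), Real.log_exp]
      have hSga : Sg * a = L w η (θ + a) - L w η θ := by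
        rw [hSgdef, if_neg ha]
        field_simp
      rw [hnum, hden, hza, hSga, L, L, Real.exp_sub, Real.exp_log hSθ,
        Real.exp_log hSθa]
      rw [eq_div_iff (ne_of_gt (mul_pos (mul_pos hc (Real.rpow_pos_of_pos hXpos θ)) hSθ))]
      field_simp
  constructor
  · rw [bajMean, ← hfz, invFunOn_eq_self (pow_injOn hIpos a) hzI]
  · exact hzI

end Mean

lemma epsmax_pos {a b δ : ℝ} (hab : a < b + 2 * δ) : 0 < epsmax a b δ := by
  have hA0 : Aa a b δ ≤ 0 := le_trans (min_le_left _ _) (min_le_right _ _)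
  have hB0 : (0 : ℝ) ≤ Bb a b δ := le_trans (le_max_right _ _) (le_max_left _ _)
  apply div_pos
  · apply Real.log_pos
    have h1 : (0:ℝ) < (b + 2 * δ - a) / 2 := by linarith
    have h2 : (0:ℝ) < |a| + |b| + 1 := by positivity
    have := div_pos (by linarith : (0:ℝ) < 8 * ((b + 2 * δ - a) / 2)) h2
    linarith
  · linarith

def goodSet {n : ℕ} (I : Set ℝ) (ε₀ : ℝ) : Set (Fin n → ℝ) :=
  (⋂ i, (fun x : Fin n → ℝ => x i) ⁻¹' I) ∩
    ⋂ i, ⋂ j, {x : Fin n → ℝ | x i < Real.exp ε₀ * x j}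

theorem main {n : ℕ} (hn : 2 ≤ n) (I : Set ℝ) (hIopen : IsOpen I)
    (hIconn : I.OrdConnected) (hIne : I.Nonempty) (hIpos : I ⊆ Set.Ioi (0 : ℝ))
    (a b : ℝ)
    (lam mu : Fin n → ℝ) (al be : Fin n → ℝ)
    (hlam : ∀ i, 0 < lam i) (hmu : ∀ i, 0 < mu i)
    (γ δ : ℝ) (hγ : 0 < γ)
    (hrel : ∀ i : Fin n, mu i = γ * lam i ∧ be i = al i + δ)
    (hab : a < b + 2 * δ) :
    ∃ U : Set (Fin n → ℝ), IsOpen U ∧ U ⊆ {x | ∀ i, x i ∈ I} ∧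
      (∀ x ∈ I, (fun _ => x) ∈ U) ∧ ∀ x ∈ U,
        bajMean I (fun x => if a = 0 then Real.log x else x ^ a)
          (fun i x => lam i * x ^ al i) x ≤
        bajMean I (fun x => if b = 0 then Real.log x else x ^ b)
          (fun i x => mu i * x ^ be i) x := by
  have hn0 : n ≠ 0 := by omega
  set ε₀ : ℝ := epsmax a b δ with hε₀def
  have hε₀pos : 0 < ε₀ := epsmax_pos hab
  refine ⟨goodSet I ε₀, ?_, ?_, ?_, ?_⟩
  · exact ((isOpen_iInter_of_finite fun i => hIopen.preimage (continuous_apply i)).inter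
      (isOpen_iInter_of_finite fun i => isOpen_iInter_of_finite fun j =>
        isOpen_lt (continuous_apply i) (continuous_const.mul (continuous_apply j))))
  · intro x hx i
    exact Set.mem_iInter.mp hx.1 i
  · intro t ht
    have ht0 : 0 < t := hIpos ht
    constructor
    · exact Set.mem_iInter.mpr fun i => ht
    · refine Set.mem_iInter.mpr fun i => Set.mem_iInter.mpr fun j => ?_
      have h1 : (1:ℝ) < Real.exp ε₀ := by
        rw [← Real.exp_zero]
        exact Real.exp_lt_exp.mpr hε₀pos
      show t < Real.exp ε₀ * t
      nlinarith
  · intro x hx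
    have hxI : ∀ i, x i ∈ I := fun i => Set.mem_iInter.mp hx.1 i
    have hxpos : ∀ i, 0 < x i := fun i => hIpos (hxI i)
    have hne : (Finset.univ : Finset (Fin n)).Nonempty :=
      Finset.univ_nonempty_iff.mpr ⟨⟨0, Nat.pos_of_ne_zero hn0⟩⟩
    obtain ⟨i₀, _, hmin⟩ := Finset.exists_min_image Finset.univ x hne
    have hmin' : ∀ i, x i₀ ≤ x i := fun i => hmin i (Finset.mem_univ i)
    set w : Fin n → ℝ := fun i => lam i * x i ^ al i with hwdef
    set η : Fin n → ℝ := fun i => Real.log (x i) - Real.log (x i₀) with hηdef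
    have hη : ∀ i, η i ∈ Icc 0 ε₀ := by
      intro i
      constructor
      · exact sub_nonneg.mpr (Real.log_le_log (hxpos i₀) (hmin' i))
      · have hlt : x i < Real.exp ε₀ * x i₀ :=
          Set.mem_iInter.mp (Set.mem_iInter.mp hx.2 i) i₀
        have := Real.log_lt_log (hxpos i) hlt
        rw [Real.log_mul (Real.exp_ne_zero _) (ne_of_gt (hxpos i₀)), Real.log_exp] at this
        simp only [hηdef]
        linarith
    -- rewrite the two weight families
    have hp : (fun (i : Fin n) (y : ℝ) => lam i * y ^ al i)
        = fun i y => 1 * lam i * y ^ (al i + 0) := by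
      funext i y
      rw [add_zero, one_mul]
    have hq : (fun (i : Fin n) (y : ℝ) => mu i * y ^ be i)
        = fun i y => γ * lam i * y ^ (al i + δ) := by
      funext i y
      rw [(hrel i).1, (hrel i).2]
    obtain ⟨hM, _⟩ := baj_val hn0 hIconn hIpos a 0 1 one_pos lam al hlam x hxI i₀ hmin'
    obtain ⟨hN, _⟩ := baj_val hn0 hIconn hIpos b δ γ hγ lam al hlam x hxI i₀ hmin'
    rw [hp, hq, hM, hN]
    apply mul_le_mul_of_nonneg_left _ (hxpos i₀).le
    apply Real.exp_le_exp.mpr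
    rw [zero_add]
    exact core (w := w) (η := η) hn0
      (fun i => mul_pos (hlam i) (Real.rpow_pos_of_pos (hxpos i) _)) hab hη le_rfl

end LCpp

/-- Corollary LCpp, sufficiency: with `f(x) = x^a` (`f = log` if `a = 0`),
`g(x) = x^b` (`g = log` if `b = 0`) and power weights `pᵢ(x) = λᵢ x^{αᵢ}`,
`qᵢ(x) = μᵢ x^{βᵢ}` on `I ⊆ (0,∞)`, if there exist `γ > 0` and `δ ∈ ℝ` such that
`μᵢ = γλᵢ`, `βᵢ = αᵢ + δ` for all `i`, and `a < b + 2δ`, then `A_{f,p}` is locally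
smaller than `A_{g,q}`. -/
theorem stmt12 {n : ℕ} (hn : 2 ≤ n) (I : Set ℝ) (hIopen : IsOpen I)
    (hIconn : I.OrdConnected) (hIne : I.Nonempty) (hIpos : I ⊆ Set.Ioi (0 : ℝ))
    (a b : ℝ)
    (lam mu : Fin n → ℝ) (al be : Fin n → ℝ)
    (hlam : ∀ i, 0 < lam i) (hmu : ∀ i, 0 < mu i)
    (γ δ : ℝ) (hγ : 0 < γ)
    (hrel : ∀ i : Fin n, mu i = γ * lam i ∧ be i = al i + δ)
    (hab : a < b + 2 * δ) :
    LocallySmaller I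
      (bajMean I (fun x => if a = 0 then Real.log x else x ^ a)
        (fun i x => lam i * x ^ al i))
      (bajMean I (fun x => if b = 0 then Real.log x else x ^ b)
        (fun i x => mu i * x ^ be i)) := by
  exact LCpp.main hn I hIopen hIconn hIne hIpos a b lam mu al be hlam hmu γ δ hγ hrel hab
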